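/- Let d ≥ 1, let Φ ⊆ ℝ^d be locally finite, let h : Φ → [0, ∞), and let c ∈ [0, ∞). Suppose that for every half-open box I = Π_{i=1}^d [a_i, b_i) with −∞ < a_i < b_i < ∞, one has n^{-d} Σ_{z ∈ Φ ∩ nI} h(z) → c·|I| as n → ∞ through the positive integers. Then for every bounded Borel set B ⊆ ℝ^d whose topological boundary has Lebesgue measure zero, ε^d Σ_{z ∈ Φ ∩ ε^{-1}B} h(z) → c·|B| as ε → 0 through positive real numbers. -/

import Mathlib

open MeasureTheory Filter Topology Metric Set
open scoped ENNReal Pointwise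

namespace Stmt12Aux

variable {d : ℕ}

/-- Half-open box. -/
def box (a b : Fin d → ℝ) : Set (EuclideanSpace ℝ (Fin d)) :=
  {x | ∀ i, x i ∈ Set.Ico (a i) (b i)}

lemma box_eq_preimage (a b : Fin d → ℝ) :
    box a b = (MeasurableEquiv.toLp 2 (Fin d → ℝ)).symm ⁻¹'
      (Set.univ.pi fun i => Set.Ico (a i) (b i)) := by
  ext x; simp [box, Set.mem_pi]

lemma measurableSet_box (a b : Fin d → ℝ) : MeasurableSet (box a b) := by
  rw [box_eq_preimage]
  exact (MeasurableEquiv.toLp 2 (Fin d → ℝ)).symm.measurable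
    (MeasurableSet.univ_pi fun i => measurableSet_Ico)

lemma volume_box (a b : Fin d → ℝ) :
    volume (box a b) = ∏ i, ENNReal.ofReal (b i - a i) := by
  rw [box_eq_preimage,
    (EuclideanSpace.volume_preserving_symm_measurableEquiv_toLp (Fin d)).measure_preimage
      (MeasurableSet.univ_pi fun i => measurableSet_Ico).nullMeasurableSet,
    volume_pi_pi]
  simp [Real.volume_Ico]

lemma volume_box_toReal (a b : Fin d → ℝ) (hab : ∀ i, a i ≤ b i) :
    (volume (box a b)).toReal = ∏ i, (b i - a i) := by
  rw [volume_box, ENNReal.toReal_prod]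
  exact Finset.prod_congr rfl fun i _ => ENNReal.toReal_ofReal (by linarith [hab i])

lemma isBounded_box (a b : Fin d → ℝ) : Bornology.IsBounded (box a b) := by
  rw [Metric.isBounded_iff_subset_closedBall 0]
  refine ⟨Real.sqrt (∑ i : Fin d, (|a i| + |b i|)^2), fun x hx => ?_⟩
  simp only [mem_closedBall, dist_zero_right]
  rw [EuclideanSpace.norm_eq]
  apply Real.sqrt_le_sqrt
  apply Finset.sum_le_sum
  intro i _
  have h1 := (hx i).1
  have h2 := (hx i).2
  have : |x i| ≤ |a i| + |b i| := by
    rw [abs_le]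
    constructor
    · have := neg_abs_le (a i); linarith [abs_nonneg (b i)]
    · have := le_abs_self (b i); linarith [abs_nonneg (a i)]
  calc ‖x i‖ ^ 2 = |x i| ^ 2 := by rw [Real.norm_eq_abs]
    _ ≤ (|a i| + |b i|) ^ 2 := by
        apply sq_le_sq' <;> [linarith [abs_nonneg (x i)]; exact this]



variable {E : Type*} (Φ : Set E) (h : E → ℝ)

lemma finsum_mono (hh : ∀ z ∈ Φ, 0 ≤ h z) {S T : Set E} (hT : (Φ ∩ T).Finite)
    (hST : S ⊆ T) : ∑ᶠ z ∈ Φ ∩ S, h z ≤ ∑ᶠ z ∈ Φ ∩ T, h z := by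
  have hS : (Φ ∩ S).Finite := hT.subset (inter_subset_inter_right _ hST)
  rw [finsum_mem_eq_finite_toFinset_sum _ hS, finsum_mem_eq_finite_toFinset_sum _ hT]
  apply Finset.sum_le_sum_of_subset_of_nonneg
  · intro x hx
    simp only [Set.Finite.mem_toFinset, Set.mem_inter_iff] at hx ⊢
    exact ⟨hx.1, hST hx.2⟩
  · intro x hx _
    simp only [Set.Finite.mem_toFinset, Set.mem_inter_iff] at hx
    exact hh x hx.1

lemma finsum_nonneg' (hh : ∀ z ∈ Φ, 0 ≤ h z) {S : Set E} (hS : (Φ ∩ S).Finite) :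
    0 ≤ ∑ᶠ z ∈ Φ ∩ S, h z := by
  rw [finsum_mem_eq_finite_toFinset_sum _ hS]
  apply Finset.sum_nonneg
  intro x hx
  simp only [Set.Finite.mem_toFinset, Set.mem_inter_iff] at hx
  exact hh x hx.1

lemma finsum_biUnion {ι : Type*} (T : Finset ι) (S : ι → Set E)
    (hd : (T : Set ι).PairwiseDisjoint S) (hfin : ∀ i ∈ T, (Φ ∩ S i).Finite) :
    ∑ᶠ z ∈ Φ ∩ ⋃ i ∈ T, S i, h z = ∑ i ∈ T, ∑ᶠ z ∈ Φ ∩ S i, h z := by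
  rw [Set.inter_iUnion₂, ← Finset.set_biUnion_coe]
  rw [finsum_mem_biUnion (fun i hi j hj hij => ?_) T.finite_toSet
    (fun i hi => hfin i hi), finsum_mem_coe_finset]
  exact (hd hi hj hij).mono Set.inter_subset_right Set.inter_subset_right

/-- Squeeze criterion for convergence along `𝓝[>] 0`. -/
lemma tendsto_of_squeeze {f : ℝ → ℝ} {L : ℝ}
    (H : ∀ δ : ℝ, 0 < δ → (∀ᶠ ε in 𝓝[>] (0:ℝ), f ε ≤ L + δ) ∧
      (∀ᶠ ε in 𝓝[>] (0:ℝ), L - δ ≤ f ε)) :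
    Tendsto f (𝓝[>] (0:ℝ)) (𝓝 L) := by
  rw [Metric.tendsto_nhds]
  intro δ hδ
  obtain ⟨h1, h2⟩ := H (δ/2) (by linarith)
  filter_upwards [h1, h2] with ε he1 he2
  rw [Real.dist_eq, abs_lt]
  constructor <;> linarith



lemma tendsto_floor_inv_atTop :
    Tendsto (fun ε : ℝ => ⌊ε⁻¹⌋₊) (𝓝[>] (0:ℝ)) atTop :=
  tendsto_nat_floor_atTop.comp tendsto_inv_nhdsGT_zero

lemma tendsto_floor_inv_succ_atTop :
    Tendsto (fun ε : ℝ => ⌊ε⁻¹⌋₊ + 1) (𝓝[>] (0:ℝ)) atTop :=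
  tendsto_atTop_mono (fun ε => Nat.le_succ _) tendsto_floor_inv_atTop

lemma tendsto_mul_floor_inv :
    Tendsto (fun ε : ℝ => ε * (⌊ε⁻¹⌋₊ : ℝ)) (𝓝[>] (0:ℝ)) (𝓝 1) := by
  apply tendsto_of_tendsto_of_tendsto_of_le_of_le'
    (g := fun ε : ℝ => 1 - ε) (h := fun _ : ℝ => (1:ℝ))
  · have : Tendsto (fun ε : ℝ => 1 - ε) (𝓝 0) (𝓝 1) := by
      have hcont : Continuous (fun ε : ℝ => 1 - ε) := by continuity
      simpa using hcont.tendsto 0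
    exact this.mono_left nhdsWithin_le_nhds
  · exact tendsto_const_nhds
  · filter_upwards [self_mem_nhdsWithin] with ε (hε : 0 < ε)
    have h1 : ε⁻¹ < ⌊ε⁻¹⌋₊ + 1 := Nat.lt_floor_add_one _
    have h2 : ε * ε⁻¹ = 1 := mul_inv_cancel₀ hε.ne'
    nlinarith [mul_lt_mul_of_pos_left h1 hε]
  · filter_upwards [self_mem_nhdsWithin] with ε (hε : 0 < ε)
    have h1 : (⌊ε⁻¹⌋₊ : ℝ) ≤ ε⁻¹ := Nat.floor_le (inv_nonneg.2 hε.le)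
    have h2 : ε * ε⁻¹ = 1 := mul_inv_cancel₀ hε.ne'
    nlinarith [mul_le_mul_of_nonneg_left h1 hε.le]

lemma tendsto_mul_floor_inv_succ :
    Tendsto (fun ε : ℝ => ε * ((⌊ε⁻¹⌋₊ : ℝ) + 1)) (𝓝[>] (0:ℝ)) (𝓝 1) := by
  apply tendsto_of_tendsto_of_tendsto_of_le_of_le'
    (g := fun _ : ℝ => (1:ℝ)) (h := fun ε : ℝ => 1 + ε)
  · exact tendsto_const_nhds
  · have : Tendsto (fun ε : ℝ => 1 + ε) (𝓝 0) (𝓝 1) := by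
      have hcont : Continuous (fun ε : ℝ => 1 + ε) := by continuity
      simpa using hcont.tendsto 0
    exact this.mono_left nhdsWithin_le_nhds
  · filter_upwards [self_mem_nhdsWithin] with ε (hε : 0 < ε)
    have h1 : ε⁻¹ < ⌊ε⁻¹⌋₊ + 1 := Nat.lt_floor_add_one _
    have h2 : ε * ε⁻¹ = 1 := mul_inv_cancel₀ hε.ne'
    nlinarith [mul_lt_mul_of_pos_left h1 hε]
  · filter_upwards [self_mem_nhdsWithin] with ε (hε : 0 < ε)
    have h1 : (⌊ε⁻¹⌋₊ : ℝ) ≤ ε⁻¹ := Nat.floor_le (inv_nonneg.2 hε.le)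
    have h2 : ε * ε⁻¹ = 1 := mul_inv_cancel₀ hε.ne'
    nlinarith [mul_le_mul_of_nonneg_left h1 hε.le]



lemma mem_box_iff {d : ℕ} {a b : Fin d → ℝ} {x : EuclideanSpace ℝ (Fin d)} :
    x ∈ box a b ↔ ∀ i, x i ∈ Set.Ico (a i) (b i) := Iff.rfl

set_option maxHeartbeats 1000000 in
lemma boxlim {d : ℕ} (Φ : Set (EuclideanSpace ℝ (Fin d)))
    (hΦ : ∀ B : Set (EuclideanSpace ℝ (Fin d)), Bornology.IsBounded B → (Φ ∩ B).Finite)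
    (h : EuclideanSpace ℝ (Fin d) → ℝ) (hh : ∀ z ∈ Φ, 0 ≤ h z)
    (c : ℝ)
    (hbox : ∀ a b : Fin d → ℝ, (∀ i, a i < b i) →
      Tendsto (fun n : ℕ => ((n : ℝ) ^ d)⁻¹ * ∑ᶠ z ∈ Φ ∩ (n : ℝ) • box a b, h z) atTop
        (𝓝 (c * (volume (box a b)).toReal)))
    (a b : Fin d → ℝ) (hab : ∀ i, a i < b i) :
    Tendsto (fun ε : ℝ => ε ^ d * ∑ᶠ z ∈ Φ ∩ ε⁻¹ • box a b, h z) (𝓝[>] (0:ℝ))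
      (𝓝 (c * ∏ i, (b i - a i))) := by
  set M : ℝ := 1 + ∑ i, (|a i| + |b i|) with hM
  clear_value M
  have hMsum : (0:ℝ) ≤ ∑ i, (|a i| + |b i|) := Finset.sum_nonneg fun i _ => by positivity
  have hM1 : (1:ℝ) ≤ M := by rw [hM]; linarith
  have hMcoord : ∀ (y : EuclideanSpace ℝ (Fin d)) (i : Fin d),
      a i - 1 ≤ y i → y i < b i + 1 → |y i| ≤ M := by
    intro y i h1 h2
    have hai : |a i| + |b i| ≤ ∑ j, (|a j| + |b j|) :=
      Finset.single_le_sum (f := fun j => |a j| + |b j|) (fun j _ => by positivity)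
        (Finset.mem_univ i)
    rw [abs_le]
    constructor
    · have := neg_abs_le (a i); rw [hM]; linarith [abs_nonneg (b i)]
    · have := le_abs_self (b i); rw [hM]; linarith [abs_nonneg (a i)]
  apply tendsto_of_squeeze
  intro δ hδ
  constructor
  · -- upper bound
    have hco : Continuous (fun t : ℝ => c * ∏ i, (b i + t - (a i - t))) := by
      apply continuous_const.mul
      exact continuous_finset_prod _ fun i _ => by continuity
    have hcont : Tendsto (fun t : ℝ => c * ∏ i, (b i + t - (a i - t))) (𝓝 0)
        (𝓝 (c * ∏ i, (b i - a i))) := by simpa using hco.tendsto 0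
    have hev1 : ∀ᶠ t in 𝓝 (0:ℝ),
        c * ∏ i, (b i + t - (a i - t)) < c * ∏ i, (b i - a i) + δ/2 :=
      hcont.eventually_lt_const (by linarith)
    obtain ⟨δ₀, hδ₀lt, hδ₀pos⟩ :=
      ((hev1.filter_mono nhdsWithin_le_nhds).and (self_mem_nhdsWithin : Set.Ioi (0:ℝ) ∈ 𝓝[>] (0:ℝ))).exists
    -- hδ₀pos : 0 < δ₀
    set a'' : Fin d → ℝ := fun i => a i - δ₀ with ha''
    set b'' : Fin d → ℝ := fun i => b i + δ₀ with hb''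
    clear_value a'' b''
    have hab'' : ∀ i, a'' i < b'' i := by
      intro i; simp only [ha'', hb'']; have := hab i; linarith
    have hgb := hbox a'' b'' hab''
    rw [volume_box_toReal a'' b'' (fun i => (hab'' i).le)] at hgb
    have hlim : Tendsto (fun ε : ℝ => (ε * ((⌊ε⁻¹⌋₊:ℝ)+1))^d *
        (((((⌊ε⁻¹⌋₊:ℝ)+1))^d)⁻¹ * ∑ᶠ z ∈ Φ ∩ ((⌊ε⁻¹⌋₊:ℝ)+1) • box a'' b'', h z))
        (𝓝[>] (0:ℝ)) (𝓝 (1^d * (c * ∏ i, (b'' i - a'' i)))) := by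
      apply Tendsto.mul (tendsto_mul_floor_inv_succ.pow d)
      have hcomp := hgb.comp tendsto_floor_inv_succ_atTop
      simp only [Function.comp_def] at hcomp
      push_cast at hcomp
      exact hcomp
    rw [one_pow, one_mul] at hlim
    have hlt' : c * ∏ i, (b'' i - a'' i) < c * ∏ i, (b i - a i) + δ := by
      have : (fun i => b'' i - a'' i) = fun i => b i + δ₀ - (a i - δ₀) := by
        rw [ha'', hb'']
      calc c * ∏ i, (b'' i - a'' i) = c * ∏ i, (b i + δ₀ - (a i - δ₀)) := by rw [this]
        _ < c * ∏ i, (b i - a i) + δ/2 := hδ₀lt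
        _ < _ := by linarith
    have hev2 := hlim.eventually_lt_const hlt'
    have hevsmall : ∀ᶠ ε in 𝓝[>] (0:ℝ), M * ε < δ₀ := by
      have hc2 : Tendsto (fun ε : ℝ => M * ε) (𝓝 0) (𝓝 0) := by
        have hcm : Continuous (fun ε : ℝ => M * ε) := by continuity
        simpa using hcm.tendsto 0
      exact (hc2.eventually_lt_const hδ₀pos).filter_mono nhdsWithin_le_nhds
    filter_upwards [hev2, hevsmall, self_mem_nhdsWithin] with ε hε2 hεM hε
    rw [Set.mem_Ioi] at hε
    set N : ℝ := (⌊ε⁻¹⌋₊:ℝ) + 1 with hNdef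
    clear_value N
    have hNpos : (0:ℝ) < N := by rw [hNdef]; positivity
    have ht1 : 1 ≤ ε * N := by
      have h1 : ε⁻¹ < N := by rw [hNdef]; exact Nat.lt_floor_add_one ε⁻¹
      have h2 := mul_lt_mul_of_pos_left h1 hε
      rw [mul_inv_cancel₀ hε.ne'] at h2
      linarith
    have ht2 : ε * N ≤ 1 + ε := by
      have h1 : (⌊ε⁻¹⌋₊:ℝ) ≤ ε⁻¹ := Nat.floor_le (inv_nonneg.2 hε.le)
      have h2 := mul_le_mul_of_nonneg_left h1 hε.le
      rw [mul_inv_cancel₀ hε.ne'] at h2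
      have h3 : ε * N = ε * (⌊ε⁻¹⌋₊:ℝ) + ε := by rw [hNdef]; ring
      linarith
    have htpos : (0:ℝ) < ε * N := lt_of_lt_of_le one_pos ht1
    have hincl : ε⁻¹ • box a b ⊆ N • box a'' b'' := by
      rintro x ⟨y, hy, rfl⟩
      have hinv1 : (ε*N)⁻¹ ≤ 1 := by
        rw [← inv_one]
        exact inv_anti₀ one_pos ht1
      have hinv2 : 1 - ε ≤ (ε*N)⁻¹ := by
        rw [← one_div, le_div_iff₀ htpos]
        nlinarith
      refine ⟨(ε*N)⁻¹ • y, ?_, ?_⟩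
      · rw [mem_box_iff]
        intro i
        have hyi1 := (hy i).1
        have hyi2 := (hy i).2
        have hyabs : |y i| ≤ M := hMcoord y i (by linarith) (by linarith)
        have hcoord : ((ε*N)⁻¹ • y) i = (ε*N)⁻¹ * y i := rfl
        have habs : |(ε*N)⁻¹ * y i - y i| ≤ M * ε := by
          have h3 : |(ε*N)⁻¹ - 1| ≤ ε := abs_le.2 ⟨by linarith, by linarith⟩
          calc |(ε*N)⁻¹ * y i - y i| = |y i| * |(ε*N)⁻¹ - 1| := by
                rw [← abs_mul]; ring_nf
            _ ≤ M * ε := mul_le_mul hyabs h3 (abs_nonneg _) (by linarith)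
        obtain ⟨hab1, hab2⟩ := abs_le.1 habs
        rw [hcoord]
        simp only [ha'', hb'']
        constructor
        · linarith
        · linarith
      · have hNN : N * (ε*N)⁻¹ = ε⁻¹ := by
          rw [mul_inv, mul_comm ε⁻¹ N⁻¹, ← mul_assoc, mul_inv_cancel₀ hNpos.ne', one_mul]
        show N • ((ε * N)⁻¹ • y) = ε⁻¹ • y
        rw [smul_smul, hNN]
    have hfin'' : (Φ ∩ N • box a'' b'').Finite := hΦ _ ((isBounded_box a'' b'').smul₀ N)
    have hmono' : ∑ᶠ z ∈ Φ ∩ ε⁻¹ • box a b, h z ≤ ∑ᶠ z ∈ Φ ∩ N • box a'' b'', h z :=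
      finsum_mono Φ h hh hfin'' hincl
    have hstep : ε^d * ∑ᶠ z ∈ Φ ∩ N • box a'' b'', h z
        = (ε*N)^d * ((N^d)⁻¹ * ∑ᶠ z ∈ Φ ∩ N • box a'' b'', h z) := by
      rw [mul_pow, mul_assoc, ← mul_assoc (N^d), mul_inv_cancel₀ (pow_ne_zero d hNpos.ne'),
        one_mul]
    calc ε^d * ∑ᶠ z ∈ Φ ∩ ε⁻¹ • box a b, h z
        ≤ ε^d * ∑ᶠ z ∈ Φ ∩ N • box a'' b'', h z :=
          mul_le_mul_of_nonneg_left hmono' (by positivity)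
      _ = (ε*N)^d * ((N^d)⁻¹ * ∑ᶠ z ∈ Φ ∩ N • box a'' b'', h z) := hstep
      _ ≤ c * ∏ i, (b i - a i) + δ := le_of_lt hε2
  · -- lower bound
    have hco : Continuous (fun t : ℝ => c * ∏ i, (b i - t - (a i + t))) := by
      apply continuous_const.mul
      exact continuous_finset_prod _ fun i _ => by continuity
    have hcont : Tendsto (fun t : ℝ => c * ∏ i, (b i - t - (a i + t))) (𝓝 0)
        (𝓝 (c * ∏ i, (b i - a i))) := by simpa using hco.tendsto 0
    have hev1 : ∀ᶠ t in 𝓝 (0:ℝ),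
        c * ∏ i, (b i - a i) - δ/2 < c * ∏ i, (b i - t - (a i + t)) :=
      hcont.eventually_const_lt (by linarith)
    have hev1b : ∀ᶠ t in 𝓝 (0:ℝ), ∀ i, t < (b i - a i)/2 :=
      eventually_all.2 fun i => gt_mem_nhds (by linarith [hab i])
    obtain ⟨δ₀, ⟨hδ₀lt, hδ₀half⟩, hδ₀pos⟩ :=
      (((hev1.and hev1b).filter_mono nhdsWithin_le_nhds).and (self_mem_nhdsWithin : Set.Ioi (0:ℝ) ∈ 𝓝[>] (0:ℝ))).exists
    -- hδ₀pos : 0 < δ₀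
    set a' : Fin d → ℝ := fun i => a i + δ₀ with ha'
    set b' : Fin d → ℝ := fun i => b i - δ₀ with hb'
    clear_value a' b'
    have hab' : ∀ i, a' i < b' i := by
      intro i; simp only [ha', hb']; have := hδ₀half i; linarith
    have hgb := hbox a' b' hab'
    rw [volume_box_toReal a' b' (fun i => (hab' i).le)] at hgb
    have hlim : Tendsto (fun ε : ℝ => (ε * (⌊ε⁻¹⌋₊:ℝ))^d *
        ((((⌊ε⁻¹⌋₊:ℝ))^d)⁻¹ * ∑ᶠ z ∈ Φ ∩ ((⌊ε⁻¹⌋₊:ℝ)) • box a' b', h z))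
        (𝓝[>] (0:ℝ)) (𝓝 (1^d * (c * ∏ i, (b' i - a' i)))) := by
      apply Tendsto.mul (tendsto_mul_floor_inv.pow d)
      have hcomp := hgb.comp tendsto_floor_inv_atTop
      simp only [Function.comp_def] at hcomp
      exact hcomp
    rw [one_pow, one_mul] at hlim
    have hlt' : c * ∏ i, (b i - a i) - δ < c * ∏ i, (b' i - a' i) := by
      have heq : (fun i => b' i - a' i) = fun i => b i - δ₀ - (a i + δ₀) := by
        rw [ha', hb']
      calc c * ∏ i, (b i - a i) - δ < c * ∏ i, (b i - a i) - δ/2 := by linarith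
        _ < c * ∏ i, (b i - δ₀ - (a i + δ₀)) := hδ₀lt
        _ = c * ∏ i, (b' i - a' i) := by rw [heq]
    have hev2 := hlim.eventually_const_lt hlt'
    have hevsmall : ∀ᶠ ε in 𝓝[>] (0:ℝ), M * ε < δ₀ := by
      have hc2 : Tendsto (fun ε : ℝ => M * ε) (𝓝 0) (𝓝 0) := by
        have hcm : Continuous (fun ε : ℝ => M * ε) := by continuity
        simpa using hcm.tendsto 0
      exact (hc2.eventually_lt_const hδ₀pos).filter_mono nhdsWithin_le_nhds
    have hevlt1 : ∀ᶠ ε in 𝓝[>] (0:ℝ), ε < 1 :=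
      (gt_mem_nhds one_pos).filter_mono nhdsWithin_le_nhds
    filter_upwards [hev2, hevsmall, hevlt1, self_mem_nhdsWithin] with ε hε2 hεM hεlt1 hε
    rw [Set.mem_Ioi] at hε
    set n : ℝ := (⌊ε⁻¹⌋₊:ℝ) with hndef
    clear_value n
    have hn1 : (1:ℝ) ≤ n := by
      rw [hndef]
      have : (1:ℕ) ≤ ⌊ε⁻¹⌋₊ := Nat.le_floor (by
        rw [Nat.cast_one]
        exact one_le_inv_iff₀.2 ⟨hε, hεlt1.le⟩)
      exact_mod_cast this
    have hnpos : (0:ℝ) < n := lt_of_lt_of_le one_pos hn1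
    have ht1 : 1 - ε ≤ ε * n := by
      have h1 : ε⁻¹ < n + 1 := by rw [hndef]; exact Nat.lt_floor_add_one ε⁻¹
      have h2 := mul_lt_mul_of_pos_left h1 hε
      rw [mul_inv_cancel₀ hε.ne'] at h2
      nlinarith
    have ht2 : ε * n ≤ 1 := by
      have h1 : n ≤ ε⁻¹ := by rw [hndef]; exact Nat.floor_le (inv_nonneg.2 hε.le)
      have h2 := mul_le_mul_of_nonneg_left h1 hε.le
      rwa [mul_inv_cancel₀ hε.ne'] at h2
    have hincl : n • box a' b' ⊆ ε⁻¹ • box a b := by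
      rintro x ⟨w, hw, rfl⟩
      refine ⟨(ε*n) • w, ?_, ?_⟩
      · rw [mem_box_iff]
        intro i
        have hwi1 := (hw i).1
        have hwi2 := (hw i).2
        simp only [ha', hb'] at hwi1 hwi2
        have hwabs : |w i| ≤ M := hMcoord w i (by linarith) (by linarith)
        have hcoord : ((ε*n) • w) i = (ε*n) * w i := rfl
        have habs : |(ε*n) * w i - w i| ≤ M * ε := by
          have h3 : |(ε*n) - 1| ≤ ε := abs_le.2 ⟨by linarith, by linarith⟩
          calc |(ε*n) * w i - w i| = |w i| * |(ε*n) - 1| := by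
                rw [← abs_mul]; ring_nf
            _ ≤ M * ε := mul_le_mul hwabs h3 (abs_nonneg _) (by linarith)
        obtain ⟨hab1, hab2⟩ := abs_le.1 habs
        rw [hcoord]
        constructor
        · linarith
        · linarith
      · have hNN : ε⁻¹ * (ε*n) = n := by
          rw [← mul_assoc, inv_mul_cancel₀ hε.ne', one_mul]
        show ε⁻¹ • ((ε * n) • w) = n • w
        rw [smul_smul, hNN]
    have hfin0 : (Φ ∩ ε⁻¹ • box a b).Finite := hΦ _ ((isBounded_box a b).smul₀ ε⁻¹)
    have hmono' : ∑ᶠ z ∈ Φ ∩ n • box a' b', h z ≤ ∑ᶠ z ∈ Φ ∩ ε⁻¹ • box a b, h z :=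
      finsum_mono Φ h hh hfin0 hincl
    have hstep : ε^d * ∑ᶠ z ∈ Φ ∩ n • box a' b', h z
        = (ε*n)^d * ((n^d)⁻¹ * ∑ᶠ z ∈ Φ ∩ n • box a' b', h z) := by
      rw [mul_pow, mul_assoc, ← mul_assoc (n^d), mul_inv_cancel₀ (pow_ne_zero d hnpos.ne'),
        one_mul]
    calc c * ∏ i, (b i - a i) - δ
        ≤ (ε*n)^d * ((n^d)⁻¹ * ∑ᶠ z ∈ Φ ∩ n • box a' b', h z) := le_of_lt hε2
      _ = ε^d * ∑ᶠ z ∈ Φ ∩ n • box a' b', h z := hstep.symm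
      _ ≤ ε^d * ∑ᶠ z ∈ Φ ∩ ε⁻¹ • box a b, h z :=
          mul_le_mul_of_nonneg_left hmono' (by positivity)


/-! ### Dyadic cubes -/

def dcube {d : ℕ} (k : ℕ) (z : Fin d → ℤ) : Set (EuclideanSpace ℝ (Fin d)) :=
  box (fun i => (z i : ℝ) / 2^k) (fun i => ((z i : ℝ) + 1) / 2^k)

variable {d : ℕ}

lemma dcube_lt (k : ℕ) (z : Fin d → ℤ) (i : Fin d) :
    ((z i : ℝ))/2^k < ((z i : ℝ)+1)/2^k := by
  have h2k : (0:ℝ) < 2^k := by positivity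
  apply div_lt_div_of_pos_right ?_ h2k
  linarith

lemma mem_dcube {k : ℕ} {z : Fin d → ℤ} {x : EuclideanSpace ℝ (Fin d)} :
    x ∈ dcube k z ↔ ∀ i, ⌊x i * 2^k⌋ = z i := by
  have h2k : (0:ℝ) < 2^k := by positivity
  constructor
  · intro hx i
    obtain ⟨h1, h2⟩ := hx i
    rw [Int.floor_eq_iff]
    exact ⟨(div_le_iff₀ h2k).1 h1, by push_cast; exact (lt_div_iff₀ h2k).1 h2⟩
  · intro hz i
    obtain ⟨h1, h2⟩ := Int.floor_eq_iff.1 (hz i)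
    constructor
    · exact (div_le_iff₀ h2k).2 h1
    · rw [lt_div_iff₀ h2k]; push_cast at h2 ⊢; linarith

lemma mem_dcube_self (k : ℕ) (x : EuclideanSpace ℝ (Fin d)) :
    x ∈ dcube k (fun i => ⌊x i * 2^k⌋) :=
  mem_dcube.2 fun _ => rfl

lemma dcube_disjoint {k : ℕ} {z z' : Fin d → ℤ} (hzz : z ≠ z') :
    Disjoint (dcube k z) (dcube (d := d) k z') := by
  rw [Set.disjoint_left]
  intro x hx hx'
  exact hzz (funext fun i => (mem_dcube.1 hx i).symm.trans (mem_dcube.1 hx' i))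

lemma dcube_succ_subset (k : ℕ) (z : Fin d → ℤ) :
    dcube (k+1) z ⊆ dcube k (fun i => ⌊(z i : ℝ)/2⌋) := by
  intro x hx
  rw [mem_dcube] at hx ⊢
  intro i
  set m : ℤ := ⌊(z i : ℝ)/2⌋ with hm
  have h1 : (m:ℝ) ≤ (z i : ℝ)/2 := Int.floor_le _
  have h2 : (z i : ℝ)/2 < m + 1 := Int.lt_floor_add_one _
  have h3 : (z i : ℝ) + 1 ≤ 2*m + 2 := by
    have hc : (z i : ℝ) < 2*m + 2 := by linarith
    have hz2 : z i < 2*m + 2 := by exact_mod_cast hc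
    have hz3 : z i + 1 ≤ 2*m + 2 := hz2
    exact_mod_cast hz3
  obtain ⟨hl, hr⟩ := Int.floor_eq_iff.1 (hx i)
  push_cast at hr
  rw [Int.floor_eq_iff]
  have hpow : (2:ℝ)^(k+1) = 2^k * 2 := by ring
  constructor
  · have hq : (z i : ℝ)/2 ≤ x i * 2^k := by
      rw [div_le_iff₀ (by norm_num : (0:ℝ) < 2)]
      calc (z i : ℝ) ≤ x i * 2^(k+1) := hl
        _ = x i * 2^k * 2 := by rw [hpow]; ring
    linarith
  · push_cast
    have hq : x i * 2^k < ((z i : ℝ) + 1)/2 := by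
      rw [lt_div_iff₀ (by norm_num : (0:ℝ) < 2)]
      calc x i * 2^k * 2 = x i * 2^(k+1) := by rw [hpow]; ring
        _ < z i + 1 := hr
    calc x i * 2^k < ((z i : ℝ)+1)/2 := hq
      _ ≤ (2*m+2)/2 := by linarith
      _ = m + 1 := by ring

lemma dist_le_of_mem_dcube {k : ℕ} {z : Fin d → ℤ} {x y : EuclideanSpace ℝ (Fin d)}
    (hx : x ∈ dcube k z) (hy : y ∈ dcube k z) :
    dist x y ≤ Real.sqrt d * ((2:ℝ)^k)⁻¹ := by
  have h2k : (0:ℝ) < 2^k := by positivity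
  rw [EuclideanSpace.dist_eq]
  have hcoord : ∀ i, dist (x i) (y i) ^ 2 ≤ (((2:ℝ)^k)⁻¹)^2 := by
    intro i
    obtain ⟨hx1, hx2⟩ := hx i
    obtain ⟨hy1, hy2⟩ := hy i
    have hlen : ((z i:ℝ)+1)/2^k - (z i:ℝ)/2^k = (2^k)⁻¹ := by field_simp; ring
    have hd : |x i - y i| ≤ ((2:ℝ)^k)⁻¹ := by
      rw [abs_le]
      constructor <;> linarith
    rw [Real.dist_eq]
    nlinarith [abs_nonneg (x i - y i)]
  calc √(∑ i, dist (x i) (y i)^2)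
      ≤ √(∑ _i : Fin d, (((2:ℝ)^k)⁻¹)^2) :=
        Real.sqrt_le_sqrt (Finset.sum_le_sum fun i _ => hcoord i)
    _ = √((d:ℝ) * (((2:ℝ)^k)⁻¹)^2) := by
        rw [Finset.sum_const, Finset.card_univ, Fintype.card_fin, nsmul_eq_mul]
    _ = Real.sqrt d * ((2:ℝ)^k)⁻¹ := by
        rw [Real.sqrt_mul (by positivity), Real.sqrt_sq (by positivity)]

lemma coord_abs_le_norm (x : EuclideanSpace ℝ (Fin d)) (i : Fin d) : |x i| ≤ ‖x‖ := by
  rw [EuclideanSpace.norm_eq]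
  calc |x i| = √(‖x i‖^2) := by
        rw [Real.sqrt_sq_eq_abs, Real.norm_eq_abs, abs_abs]
    _ ≤ √(∑ j, ‖x j‖^2) :=
        Real.sqrt_le_sqrt (Finset.single_le_sum (f := fun j => ‖x j‖^2)
          (fun j _ => by positivity) (Finset.mem_univ i))

lemma finite_dcube_index (k : ℕ) {S : Set (EuclideanSpace ℝ (Fin d))}
    (hS : Bornology.IsBounded S) :
    {z : Fin d → ℤ | (dcube k z ∩ S).Nonempty}.Finite := by
  obtain ⟨R, hR⟩ := (Metric.isBounded_iff_subset_closedBall 0).1 hS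
  apply Set.Finite.subset
    (Set.Finite.pi (fun i : Fin d => Set.finite_Icc (⌊-R * 2^k⌋ : ℤ) ⌊R * 2^k⌋))
  intro z hz
  obtain ⟨x, hxc, hxS⟩ := hz
  have hxn : ‖x‖ ≤ R := by
    have := hR hxS
    simpa [Metric.mem_closedBall, dist_zero_right] using this
  have h2k : (0:ℝ) ≤ 2^k := by positivity
  rw [Set.mem_univ_pi]
  intro i
  have hxi : |x i| ≤ R := (coord_abs_le_norm x i).trans hxn
  obtain ⟨hxi1, hxi2⟩ := abs_le.1 hxi
  have hzi : z i = ⌊x i * 2^k⌋ := (mem_dcube.1 hxc i).symm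
  rw [Set.mem_Icc, hzi]
  constructor
  · exact Int.floor_le_floor (by nlinarith)
  · exact Int.floor_le_floor (by nlinarith)


lemma smul_disjoint {c : ℝ} (hc : c ≠ 0) {A B : Set (EuclideanSpace ℝ (Fin d))}
    (hAB : Disjoint A B) : Disjoint (c • A) (c • B) := by
  rw [← Set.image_smul, ← Set.image_smul]
  exact Set.disjoint_image_of_injective (smul_right_injective _ hc) hAB

lemma volume_ne_top_of_isBounded {S : Set (EuclideanSpace ℝ (Fin d))}
    (hS : Bornology.IsBounded S) : volume S ≠ ⊤ := by
  obtain ⟨R, hR⟩ := (Metric.isBounded_iff_subset_closedBall 0).1 hS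
  exact ne_top_of_le_ne_top measure_closedBall_lt_top.ne (measure_mono hR)

lemma cubeslim {d : ℕ} (Φ : Set (EuclideanSpace ℝ (Fin d)))
    (hΦ : ∀ B : Set (EuclideanSpace ℝ (Fin d)), Bornology.IsBounded B → (Φ ∩ B).Finite)
    (h : EuclideanSpace ℝ (Fin d) → ℝ) (hh : ∀ z ∈ Φ, 0 ≤ h z)
    (c : ℝ)
    (hbox : ∀ a b : Fin d → ℝ, (∀ i, a i < b i) →
      Tendsto (fun n : ℕ => ((n : ℝ) ^ d)⁻¹ * ∑ᶠ z ∈ Φ ∩ (n : ℝ) • box a b, h z) atTop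
        (𝓝 (c * (volume (box a b)).toReal)))
    (k : ℕ) (T : Finset (Fin d → ℤ)) :
    Tendsto (fun ε : ℝ =>
        ε ^ d * ∑ᶠ z ∈ Φ ∩ ε⁻¹ • ⋃ w ∈ (T : Set (Fin d → ℤ)), dcube k w, h z)
      (𝓝[>] (0:ℝ))
      (𝓝 (c * (volume (⋃ w ∈ (T : Set (Fin d → ℤ)), dcube (d := d) k w)).toReal)) := by
  have hdisj : (T : Set (Fin d → ℤ)).PairwiseDisjoint (dcube (d := d) k) :=
    fun z _ z' _ hne => dcube_disjoint hne
  have hvol : volume (⋃ w ∈ (T : Set (Fin d → ℤ)), dcube (d := d) k w)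
      = ∑ w ∈ T, volume (dcube (d := d) k w) := by
    rw [Finset.set_biUnion_coe]
    exact measure_biUnion_finset hdisj (fun w _ => measurableSet_box _ _)
  have hsum : Tendsto (fun ε : ℝ => ∑ w ∈ T, ε ^ d * ∑ᶠ z ∈ Φ ∩ ε⁻¹ • dcube k w, h z)
      (𝓝[>] (0:ℝ))
      (𝓝 (∑ w ∈ T, c * ∏ i, (((w i : ℝ) + 1)/2^k - (w i : ℝ)/2^k))) := by
    apply tendsto_finset_sum
    intro w _
    exact boxlim Φ hΦ h hh c hbox _ _ (dcube_lt k w)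
  have hval : (∑ w ∈ T, c * ∏ i, (((w i : ℝ) + 1)/2^k - (w i : ℝ)/2^k))
      = c * (volume (⋃ w ∈ (T : Set (Fin d → ℤ)), dcube (d := d) k w)).toReal := by
    rw [hvol, ← Finset.mul_sum]
    congr 1
    rw [ENNReal.toReal_sum
      (fun w _ => volume_ne_top_of_isBounded (S := dcube (d := d) k w) (isBounded_box _ _))]
    exact Finset.sum_congr rfl fun w _ =>
      (volume_box_toReal _ _ fun i => (dcube_lt k w i).le).symm
  rw [← hval]
  apply hsum.congr'
  filter_upwards [self_mem_nhdsWithin] with ε hε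
  rw [Set.mem_Ioi] at hε
  have hdisj' : (T : Set (Fin d → ℤ)).PairwiseDisjoint
      (fun w => ε⁻¹ • dcube (d := d) k w) :=
    fun z _ z' _ hne => smul_disjoint (inv_ne_zero hε.ne') (dcube_disjoint hne)
  have hfin' : ∀ w ∈ T, (Φ ∩ ε⁻¹ • dcube (d := d) k w).Finite :=
    fun w _ => hΦ _ ((isBounded_box _ _).smul₀ _)
  calc ∑ w ∈ T, ε ^ d * ∑ᶠ z ∈ Φ ∩ ε⁻¹ • dcube k w, h z
      = ε ^ d * ∑ w ∈ T, ∑ᶠ z ∈ Φ ∩ ε⁻¹ • dcube k w, h z := (Finset.mul_sum _ _ _).symm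
    _ = ε ^ d * ∑ᶠ z ∈ Φ ∩ ⋃ w ∈ T, ε⁻¹ • dcube k w, h z := by
        rw [finsum_biUnion Φ h T _ hdisj' hfin']
    _ = ε ^ d * ∑ᶠ z ∈ Φ ∩ ε⁻¹ • ⋃ w ∈ (T : Set (Fin d → ℤ)), dcube k w, h z := by
        rw [Set.smul_set_iUnion₂, Finset.set_biUnion_coe]


lemma exists_small_scale (C r : ℝ) (hr : 0 < r) : ∃ k : ℕ, C * ((2:ℝ)^k)⁻¹ < r := by
  have h1 : Tendsto (fun k : ℕ => ((2:ℝ)^k)⁻¹) atTop (𝓝 0) := by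
    simpa [inv_pow] using
      tendsto_pow_atTop_nhds_zero_of_lt_one (by norm_num : (0:ℝ) ≤ 2⁻¹)
        (by norm_num : (2:ℝ)⁻¹ < 1)
  have h2 : Tendsto (fun k : ℕ => C * ((2:ℝ)^k)⁻¹) atTop (𝓝 0) := by
    simpa using tendsto_const_nhds.mul h1
  exact (h2.eventually_lt_const hr).exists

end Stmt12Aux


open Stmt12Aux

theorem stmt12 {d : ℕ} (hd : 1 ≤ d)
    (Φ : Set (EuclideanSpace ℝ (Fin d)))
    -- Φ is locally finite:
    (hΦ : ∀ B : Set (EuclideanSpace ℝ (Fin d)), Bornology.IsBounded B → (Φ ∩ B).Finite)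
    (h : EuclideanSpace ℝ (Fin d) → ℝ) (hh : ∀ z ∈ Φ, 0 ≤ h z)
    (c : ℝ) (hc : 0 ≤ c)
    -- n^{-d} Σ_{z ∈ Φ ∩ nI} h(z) → c·|I| for every half-open box I, along positive integers n:
    (hbox : ∀ a b : Fin d → ℝ, (∀ i, a i < b i) →
      Tendsto (fun n : ℕ =>
          ((n : ℝ) ^ d)⁻¹ *
            ∑ᶠ z ∈ Φ ∩ (n : ℝ) •
              {x : EuclideanSpace ℝ (Fin d) | ∀ i, x i ∈ Set.Ico (a i) (b i)}, h z)
        atTop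
        (𝓝 (c * (volume {x : EuclideanSpace ℝ (Fin d) | ∀ i, x i ∈ Set.Ico (a i) (b i)}).toReal))) :
    -- then ε^d Σ_{z ∈ Φ ∩ ε⁻¹B} h(z) → c·|B| for every bounded Borel continuity set B,
    -- along positive real ε → 0:
    ∀ B : Set (EuclideanSpace ℝ (Fin d)), MeasurableSet B → Bornology.IsBounded B →
      volume (frontier B) = 0 →
      Tendsto (fun ε : ℝ => ε ^ d * ∑ᶠ z ∈ Φ ∩ ε⁻¹ • B, h z) (𝓝[>] (0:ℝ))
        (𝓝 (c * (volume B).toReal)) := by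
  intro B hBmeas hBbd hBfront
  classical
  have hbox' : ∀ a b : Fin d → ℝ, (∀ i, a i < b i) →
      Tendsto (fun n : ℕ =>
          ((n : ℝ) ^ d)⁻¹ * ∑ᶠ z ∈ Φ ∩ (n : ℝ) • Stmt12Aux.box a b, h z) atTop
        (𝓝 (c * (volume (Stmt12Aux.box a b)).toReal)) := hbox
  have hclosed_bd : Bornology.IsBounded (closure B) := hBbd.closure
  set Out : ℕ → Set (Fin d → ℤ) :=
    fun k => {z | (dcube k z ∩ closure B).Nonempty} with hOutdef
  set Inn : ℕ → Set (Fin d → ℤ) := fun k => {z | dcube k z ⊆ interior B} with hInndef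
  have hOutfin : ∀ k, (Out k).Finite := fun k => finite_dcube_index k hclosed_bd
  have hdcube_ne : ∀ (k : ℕ) (z : Fin d → ℤ), (dcube (d := d) k z).Nonempty := by
    intro k z
    refine ⟨WithLp.toLp 2 (fun i => (z i : ℝ)/2^k : Fin d → ℝ), fun i => ⟨le_rfl, dcube_lt k z i⟩⟩
  have hInnsubOut : ∀ k, Inn k ⊆ Out k := by
    intro k z hz
    obtain ⟨x, hx⟩ := hdcube_ne k z
    exact ⟨x, hx, subset_closure (interior_subset (hz hx))⟩
  have hInnfin : ∀ k, (Inn k).Finite := fun k => (hOutfin k).subset (hInnsubOut k)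
  set V : ℕ → Set (EuclideanSpace ℝ (Fin d)) := fun k => ⋃ z ∈ Out k, dcube k z with hVdef
  set U : ℕ → Set (EuclideanSpace ℝ (Fin d)) := fun k => ⋃ z ∈ Inn k, dcube k z with hUdef
  have hUsub : ∀ k, U k ⊆ interior B := fun k => Set.iUnion₂_subset fun z hz => hz
  have hBsubV : ∀ k, closure B ⊆ V k := by
    intro k x hx
    exact Set.mem_biUnion (show _ ∈ Out k from ⟨x, mem_dcube_self k x, hx⟩)
      (mem_dcube_self k x)
  have hVanti : Antitone V := by
    apply antitone_nat_of_succ_le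
    intro k x hx
    obtain ⟨z, hz, hxz⟩ := Set.mem_iUnion₂.1 hx
    obtain ⟨y, hy, hyB⟩ := hz
    exact Set.mem_biUnion
      (show _ ∈ Out k from ⟨y, dcube_succ_subset k z hy, hyB⟩)
      (dcube_succ_subset k z hxz)
  have hUmono : Monotone U := by
    apply monotone_nat_of_le_succ
    intro k x hx
    obtain ⟨z, hz, hxz⟩ := Set.mem_iUnion₂.1 hx
    have hxw : x ∈ dcube (k+1) (fun i => ⌊x i * 2^(k+1)⌋) := mem_dcube_self (k+1) x
    have hsub := dcube_succ_subset k (fun i => ⌊x i * 2^(k+1)⌋)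
    have hxw' : x ∈ dcube k (fun i => ⌊((⌊x i * 2^(k+1)⌋ : ℤ) : ℝ)/2⌋) := hsub hxw
    have hweq : (fun i => ⌊((⌊x i * 2^(k+1)⌋ : ℤ) : ℝ)/2⌋) = z := by
      by_contra hne
      exact absurd rfl ((dcube_disjoint hne).ne_of_mem hxw' hxz)
    rw [hweq] at hsub
    exact Set.mem_biUnion (show _ ∈ Inn (k+1) from hsub.trans hz) hxw
  have hV_inter : (⋂ k, V k) = closure B := by
    apply Set.Subset.antisymm
    · intro x hx
      have hx' : ∀ k, x ∈ V k := Set.mem_iInter.1 hx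
      rw [← closure_closure (s := B), Metric.mem_closure_iff]
      intro η hη
      obtain ⟨k, hk⟩ := exists_small_scale (Real.sqrt d) η hη
      obtain ⟨z, hz, hxz⟩ := Set.mem_iUnion₂.1 (hx' k)
      obtain ⟨y, hy, hyB⟩ := hz
      exact ⟨y, hyB, lt_of_le_of_lt (dist_le_of_mem_dcube hxz hy) hk⟩
    · intro x hx
      exact Set.mem_iInter.2 fun k => hBsubV k hx
  have hU_union : (⋃ k, U k) = interior B := by
    apply Set.Subset.antisymm
    · exact Set.iUnion_subset hUsub
    · intro x hx
      obtain ⟨r, hr, hball⟩ := Metric.isOpen_iff.1 isOpen_interior x hx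
      obtain ⟨k, hk⟩ := exists_small_scale (Real.sqrt d) r hr
      refine Set.mem_iUnion.2 ⟨k, Set.mem_biUnion
        (show _ ∈ Inn k from fun y hy => hball ?_) (mem_dcube_self k x)⟩
      rw [Metric.mem_ball]
      exact lt_of_le_of_lt (dist_le_of_mem_dcube hy (mem_dcube_self k x)) hk
  have hVmeas : ∀ k, MeasurableSet (V k) :=
    fun k => (hOutfin k).measurableSet_biUnion fun z _ => measurableSet_box _ _
  have hVbd : ∀ k, Bornology.IsBounded (V k) :=
    fun k => (Bornology.isBounded_biUnion (hOutfin k)).2 fun z _ => isBounded_box _ _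
  have hvolclosure : volume (closure B) = volume B := by
    apply le_antisymm
    · calc volume (closure B) ≤ volume (B ∪ frontier B) := measure_mono (by
            rw [closure_eq_interior_union_frontier]
            exact Set.union_subset_union_left _ interior_subset)
        _ ≤ volume B + volume (frontier B) := measure_union_le _ _
        _ = volume B := by rw [hBfront, add_zero]
    · exact measure_mono subset_closure
  have hvolinterior : volume (interior B) = volume B := by
    apply le_antisymm
    · exact measure_mono interior_subset
    · calc volume B ≤ volume (interior B ∪ frontier B) := measure_mono (by
            rw [← closure_eq_interior_union_frontier]
            exact subset_closure)
        _ ≤ volume (interior B) + volume (frontier B) := measure_union_le _ _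
        _ = volume (interior B) := by rw [hBfront, add_zero]
  have hVlim : Tendsto (fun k => volume (V k)) atTop (𝓝 (volume B)) := by
    have ht := tendsto_measure_iInter_atTop (μ := volume)
      (fun k => (hVmeas k).nullMeasurableSet) hVanti
      ⟨0, volume_ne_top_of_isBounded (hVbd 0)⟩
    rw [hV_inter, hvolclosure] at ht
    exact ht
  have hUlim : Tendsto (fun k => volume (U k)) atTop (𝓝 (volume B)) := by
    have ht := tendsto_measure_iUnion_atTop (μ := volume) hUmono
    rw [hU_union, hvolinterior] at ht
    exact ht
  have hBvol_ne : volume B ≠ ⊤ := volume_ne_top_of_isBounded hBbd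
  have hVlimR : Tendsto (fun k => c * (volume (V k)).toReal) atTop
      (𝓝 (c * (volume B).toReal)) :=
    tendsto_const_nhds.mul ((ENNReal.tendsto_toReal hBvol_ne).comp hVlim)
  have hUlimR : Tendsto (fun k => c * (volume (U k)).toReal) atTop
      (𝓝 (c * (volume B).toReal)) :=
    tendsto_const_nhds.mul ((ENNReal.tendsto_toReal hBvol_ne).comp hUlim)
  have hVcube : ∀ k, Tendsto (fun ε : ℝ => ε ^ d * ∑ᶠ z ∈ Φ ∩ ε⁻¹ • V k, h z)
      (𝓝[>] (0:ℝ)) (𝓝 (c * (volume (V k)).toReal)) := by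
    intro k
    have hTlim := cubeslim Φ hΦ h hh c hbox' k (hOutfin k).toFinset
    have hTeq : (⋃ w ∈ (((hOutfin k).toFinset : Finset (Fin d → ℤ)) :
        Set (Fin d → ℤ)), dcube (d := d) k w) = V k := by
      rw [hVdef]
      ext x
      simp [Set.Finite.mem_toFinset]
    rwa [hTeq] at hTlim
  have hUcube : ∀ k, Tendsto (fun ε : ℝ => ε ^ d * ∑ᶠ z ∈ Φ ∩ ε⁻¹ • U k, h z)
      (𝓝[>] (0:ℝ)) (𝓝 (c * (volume (U k)).toReal)) := by
    intro k
    have hTlim := cubeslim Φ hΦ h hh c hbox' k (hInnfin k).toFinset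
    have hTeq : (⋃ w ∈ (((hInnfin k).toFinset : Finset (Fin d → ℤ)) :
        Set (Fin d → ℤ)), dcube (d := d) k w) = U k := by
      rw [hUdef]
      ext x
      simp [Set.Finite.mem_toFinset]
    rwa [hTeq] at hTlim
  have hBsubVk : ∀ k, B ⊆ V k := fun k => subset_closure.trans (hBsubV k)
  have hUsubB : ∀ k, U k ⊆ B := fun k => (hUsub k).trans interior_subset
  clear_value V U Out Inn
  clear hVdef hUdef hOutdef hInndef hV_inter hU_union hVanti hUmono hVmeas hBsubV hUsub
  apply tendsto_of_squeeze
  intro δ hδ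
  constructor
  · obtain ⟨k, hk⟩ := (hVlimR.eventually_lt_const
      (by linarith : c * (volume B).toReal < c * (volume B).toReal + δ/2)).exists
    have hev := (hVcube k).eventually_lt_const
      (show c * (volume (V k)).toReal < c * (volume B).toReal + δ by linarith)
    filter_upwards [hev, self_mem_nhdsWithin] with ε hε1 hε2
    rw [Set.mem_Ioi] at hε2
    have hfinV : (Φ ∩ ε⁻¹ • V k).Finite := hΦ _ ((hVbd k).smul₀ _)
    have hmono := finsum_mono Φ h hh hfinV (Set.smul_set_mono (hBsubVk k))
    calc ε^d * ∑ᶠ z ∈ Φ ∩ ε⁻¹ • B, h z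
        ≤ ε^d * ∑ᶠ z ∈ Φ ∩ ε⁻¹ • V k, h z :=
          mul_le_mul_of_nonneg_left hmono (by positivity)
      _ ≤ c * (volume B).toReal + δ := le_of_lt hε1
  · obtain ⟨k, hk⟩ := (hUlimR.eventually_const_lt
      (by linarith : c * (volume B).toReal - δ/2 < c * (volume B).toReal)).exists
    have hev := (hUcube k).eventually_const_lt
      (show c * (volume B).toReal - δ < c * (volume (U k)).toReal by linarith)
    filter_upwards [hev, self_mem_nhdsWithin] with ε hε1 hε2
    rw [Set.mem_Ioi] at hε2
    have hfinB : (Φ ∩ ε⁻¹ • B).Finite := hΦ _ (hBbd.smul₀ _)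
    have hmono := finsum_mono Φ h hh hfinB (Set.smul_set_mono (hUsubB k))
    calc c * (volume B).toReal - δ
        ≤ ε^d * ∑ᶠ z ∈ Φ ∩ ε⁻¹ • U k, h z := le_of_lt hε1
      _ ≤ ε^d * ∑ᶠ z ∈ Φ ∩ ε⁻¹ • B, h z :=
          mul_le_mul_of_nonneg_left hmono (by positivity)
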